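/- For every nonnegative integer n, there exist a linearly ordered set (Ω, ≤) and a set C of n subsets of Ω, each convex with respect to ≤, such that the smallest patchwork on Ω containing C has exactly 2n² − n + 2 elements. (For example, one may take Ω = {−n, −n+1, …, n} with the usual order and C = { [−n+i, i−1] : i = 1, …, n }, where [a, b] denotes {k ∈ ℤ : a ≤ k ≤ b}.) -/

import Mathlib

/-- A subset `A` is convex with respect to an order relation `le` if whenever
`p ≤ q ≤ r` with `p ∈ A` and `r ∈ A`, also `q ∈ A`. -/
def IsConvex {Ω : Type*} (le : Ω → Ω → Prop) (A : Set Ω) : Prop :=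
  ∀ p q r : Ω, le p q → le q r → p ∈ A → r ∈ A → q ∈ A

/-- Two subsets overlap if they have nonempty intersection and neither contains the other. -/
def Overlap {Ω : Type*} (A B : Set Ω) : Prop :=
  (A ∩ B).Nonempty ∧ ¬ A ⊆ B ∧ ¬ B ⊆ A

/-- A patchwork on `Ω` is a set of subsets of `Ω` containing `∅` and `Ω` and closed under
intersection, union and difference of overlapping pairs. -/
def IsPatchwork {Ω : Type*} (P : Set (Set Ω)) : Prop :=
  ∅ ∈ P ∧ Set.univ ∈ P ∧
    ∀ A ∈ P, ∀ B ∈ P, Overlap A B → A ∩ B ∈ P ∧ A ∪ B ∈ P ∧ A \ B ∈ P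

/-- A member of a patchwork is autonomous if it is nonempty and overlaps no member. -/
def Autonomous {Ω : Type*} (P : Set (Set Ω)) (A : Set Ω) : Prop :=
  A ∈ P ∧ A.Nonempty ∧ ∀ B ∈ P, ¬ Overlap A B

/-- The cohort under `B`: the maximal autonomous proper subsets of `B`. -/
def Cohort {Ω : Type*} (P : Set (Set Ω)) (B : Set Ω) : Set (Set Ω) :=
  {A | Autonomous P A ∧ A ⊂ B ∧ ∀ C, Autonomous P C → C ⊂ B → A ⊆ C → A = C}

/-- Two members of a patchwork are adjacent if they are disjoint and their union is a member. -/
def Adjacent {Ω : Type*} (P : Set (Set Ω)) (A B : Set Ω) : Prop :=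
  Disjoint A B ∧ A ∪ B ∈ P

/-- The smallest patchwork on `Ω` containing `C`. -/
def patchworkClosure {Ω : Type*} (C : Set (Set Ω)) : Set (Set Ω) :=
  ⋂₀ {P | IsPatchwork P ∧ C ⊆ P}

namespace St18

def Pn (n : ℕ) : Set (Set ℤ) :=
  {∅, Set.univ} ∪ {A | ∃ a b : ℤ, 1 - (n:ℤ) ≤ a ∧ a ≤ b ∧ b ≤ (n:ℤ) - 1 ∧ A = Set.Icc a b}

lemma patchwork_Pn (n : ℕ) : IsPatchwork (Pn n) := by
  refine ⟨Or.inl (Or.inl rfl), Or.inl (Or.inr rfl), ?_⟩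
  rintro A hA B hB ⟨⟨x, hxA, hxB⟩, hAB, hBA⟩
  rcases hA with (rfl | rfl) | ⟨a, b, ha, hab, hb, rfl⟩
  · exact absurd hxA (Set.notMem_empty x)
  · exact absurd (Set.subset_univ B) hBA
  rcases hB with (rfl | rfl) | ⟨c, d, hc, hcd, hd, rfl⟩
  · exact absurd hxB (Set.notMem_empty x)
  · exact absurd (Set.subset_univ _) hAB
  obtain ⟨y, hyA, hyB⟩ := Set.not_subset.1 hAB
  obtain ⟨z, hzB, hzA⟩ := Set.not_subset.1 hBA
  simp only [Set.mem_Icc, not_and, not_le] at hxA hxB hyA hyB hzB hzA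
  refine ⟨?_, ?_, ?_⟩
  · refine Or.inr ⟨max a c, min b d, ?_, ?_, ?_, ?_⟩
    · omega
    · omega
    · omega
    · ext w; simp only [Set.mem_inter_iff, Set.mem_Icc]; omega
  · refine Or.inr ⟨min a c, max b d, ?_, ?_, ?_, ?_⟩
    · omega
    · omega
    · omega
    · ext w; simp only [Set.mem_union, Set.mem_Icc]; omega
  · -- difference
    by_cases hy : y < c
    · refine Or.inr ⟨a, c - 1, ?_, ?_, ?_, ?_⟩
      · omega
      · omega
      · omega
      · ext w; simp only [Set.mem_diff, Set.mem_Icc, not_and, not_le]; omega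
    · refine Or.inr ⟨d + 1, b, ?_, ?_, ?_, ?_⟩
      · omega
      · omega
      · omega
      · ext w; simp only [Set.mem_diff, Set.mem_Icc, not_and, not_le]; omega



def Cn (n : ℕ) : Set (Set ℤ) :=
  (fun i : ℤ => Set.Icc (i - (n:ℤ)) (i - 1)) '' Set.Icc 1 (n:ℤ)

variable {n : ℕ} {Q : Set (Set ℤ)} (hQ : IsPatchwork Q) (hC : Cn n ⊆ Q)

section
include hQ hC

lemma gen_A (i : ℤ) (h1 : 1 ≤ i) (h2 : i ≤ (n:ℤ)) :
    Set.Icc (i - (n:ℤ)) (i - 1) ∈ Q :=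
  hC ⟨i, Set.mem_Icc.2 ⟨h1, h2⟩, rfl⟩

-- Icc a 0 for 1-n ≤ a ≤ 0
lemma gen_left (a : ℤ) (h1 : 1 - (n:ℤ) ≤ a) (h2 : a ≤ 0) : Set.Icc a 0 ∈ Q := by
  rcases eq_or_lt_of_le h1 with h | h
  · have := gen_A hQ hC 1 le_rfl (by omega)
    simpa [← h] using this
  · have hAi := gen_A hQ hC (a + n) (by omega) (by omega)
    have hA1 := gen_A hQ hC 1 le_rfl (by omega)
    have hov : Overlap (Set.Icc (a + (n:ℤ) - (n:ℤ)) (a + (n:ℤ) - 1)) (Set.Icc (1 - (n:ℤ)) (1 - 1)) := by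
      refine ⟨⟨0, ?_⟩, ?_, ?_⟩
      · simp only [Set.mem_inter_iff, Set.mem_Icc]; omega
      · intro hsub
        have := hsub (show (a + (n:ℤ) - 1) ∈ _ from Set.mem_Icc.2 (by omega))
        simp only [Set.mem_Icc] at this; omega
      · intro hsub
        have := hsub (show (1 - (n:ℤ)) ∈ _ from Set.mem_Icc.2 (by omega))
        simp only [Set.mem_Icc] at this; omega
    have := (hQ.2.2 _ hAi _ hA1 hov).1
    have heq : Set.Icc (a + (n:ℤ) - (n:ℤ)) (a + (n:ℤ) - 1) ∩ Set.Icc (1 - (n:ℤ)) (1 - 1)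
        = Set.Icc a 0 := by
      ext w; simp only [Set.mem_inter_iff, Set.mem_Icc]; omega
    rwa [heq] at this

-- Icc 0 b for 0 ≤ b ≤ n-1
lemma gen_right (b : ℤ) (h1 : 0 ≤ b) (h2 : b ≤ (n:ℤ) - 1) : Set.Icc 0 b ∈ Q := by
  rcases eq_or_lt_of_le h2 with h | h
  · have := gen_A hQ hC n (by omega) le_rfl
    simpa [h] using this
  · have hAn := gen_A hQ hC n (by omega) le_rfl
    have hAb := gen_A hQ hC (b + 1) (by omega) (by omega)
    have hov : Overlap (Set.Icc ((n:ℤ) - (n:ℤ)) ((n:ℤ) - 1)) (Set.Icc (b + 1 - (n:ℤ)) (b + 1 - 1)) := by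
      refine ⟨⟨0, ?_⟩, ?_, ?_⟩
      · simp only [Set.mem_inter_iff, Set.mem_Icc]; omega
      · intro hsub
        have := hsub (show ((n:ℤ) - 1) ∈ _ from Set.mem_Icc.2 (by omega))
        simp only [Set.mem_Icc] at this; omega
      · intro hsub
        have := hsub (show (b + 1 - (n:ℤ)) ∈ _ from Set.mem_Icc.2 (by omega))
        simp only [Set.mem_Icc] at this; omega
    have := (hQ.2.2 _ hAn _ hAb hov).1
    have heq : Set.Icc ((n:ℤ) - (n:ℤ)) ((n:ℤ) - 1) ∩ Set.Icc (b + 1 - (n:ℤ)) (b + 1 - 1)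
        = Set.Icc 0 b := by
      ext w; simp only [Set.mem_inter_iff, Set.mem_Icc]; omega
    rwa [heq] at this

-- crossing intervals
lemma gen_cross (a b : ℤ) (h1 : 1 - (n:ℤ) ≤ a) (h2 : a ≤ 0) (h3 : 0 ≤ b) (h4 : b ≤ (n:ℤ) - 1) :
    Set.Icc a b ∈ Q := by
  rcases eq_or_lt_of_le h2 with rfl | ha
  · exact gen_right hQ hC b h3 h4
  rcases eq_or_lt_of_le h3 with rfl | hb
  · exact gen_left hQ hC a h1 h2
  have hL := gen_left hQ hC a h1 h2
  have hR := gen_right hQ hC b h3 h4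
  have hov : Overlap (Set.Icc a 0) (Set.Icc 0 b) := by
    refine ⟨⟨0, ?_⟩, ?_, ?_⟩
    · simp only [Set.mem_inter_iff, Set.mem_Icc]; omega
    · intro hsub
      have := hsub (show a ∈ _ from Set.mem_Icc.2 (by omega))
      simp only [Set.mem_Icc] at this; omega
    · intro hsub
      have := hsub (show b ∈ _ from Set.mem_Icc.2 (by omega))
      simp only [Set.mem_Icc] at this; omega
  have := (hQ.2.2 _ hL _ hR hov).2.1
  rwa [Set.Icc_union_Icc_eq_Icc h2 h3] at this

-- negative intervals
lemma gen_neg (a b : ℤ) (h1 : 1 - (n:ℤ) ≤ a) (h2 : a ≤ b) (h3 : b ≤ -1) :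
    Set.Icc a b ∈ Q := by
  have hn2 : 2 ≤ (n:ℤ) := by omega
  have hL := gen_left hQ hC a h1 (by omega)
  have hX := gen_cross hQ hC (b+1) 1 (by omega) (by omega) (by omega) (by omega)
  have hov : Overlap (Set.Icc a 0) (Set.Icc (b+1) 1) := by
    refine ⟨⟨0, ?_⟩, ?_, ?_⟩
    · simp only [Set.mem_inter_iff, Set.mem_Icc]; omega
    · intro hsub
      have := hsub (show a ∈ _ from Set.mem_Icc.2 (by omega))
      simp only [Set.mem_Icc] at this; omega
    · intro hsub
      have := hsub (show (1:ℤ) ∈ _ from Set.mem_Icc.2 (by omega))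
      simp only [Set.mem_Icc] at this; omega
  have := (hQ.2.2 _ hL _ hX hov).2.2
  have heq : Set.Icc a 0 \ Set.Icc (b+1) 1 = Set.Icc a b := by
    ext w; simp only [Set.mem_diff, Set.mem_Icc, not_and, not_le]; omega
  rwa [heq] at this

-- positive intervals
lemma gen_pos (a b : ℤ) (h1 : 1 ≤ a) (h2 : a ≤ b) (h3 : b ≤ (n:ℤ) - 1) :
    Set.Icc a b ∈ Q := by
  have hn2 : 2 ≤ (n:ℤ) := by omega
  have hR := gen_right hQ hC b (by omega) h3
  have hX := gen_cross hQ hC (-1) (a-1) (by omega) (by omega) (by omega) (by omega)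
  have hov : Overlap (Set.Icc 0 b) (Set.Icc (-1) (a-1)) := by
    refine ⟨⟨0, ?_⟩, ?_, ?_⟩
    · simp only [Set.mem_inter_iff, Set.mem_Icc]; omega
    · intro hsub
      have := hsub (show b ∈ _ from Set.mem_Icc.2 (by omega))
      simp only [Set.mem_Icc] at this; omega
    · intro hsub
      have := hsub (show (-1:ℤ) ∈ _ from Set.mem_Icc.2 (by omega))
      simp only [Set.mem_Icc] at this; omega
  have := (hQ.2.2 _ hR _ hX hov).2.2
  have heq : Set.Icc 0 b \ Set.Icc (-1) (a-1) = Set.Icc a b := by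
    ext w; simp only [Set.mem_diff, Set.mem_Icc, not_and, not_le]; omega
  rwa [heq] at this

lemma gen_all (a b : ℤ) (h1 : 1 - (n:ℤ) ≤ a) (h2 : a ≤ b) (h3 : b ≤ (n:ℤ) - 1) :
    Set.Icc a b ∈ Q := by
  rcases le_or_gt a 0 with ha | ha
  · rcases le_or_gt 0 b with hb | hb
    · exact gen_cross hQ hC a b h1 ha hb h3
    · exact gen_neg hQ hC a b h1 h2 (by omega)
  · exact gen_pos hQ hC a b (by omega) h2 h3

end



lemma sum_eq (n : ℕ) :
    ∑ a ∈ Finset.Icc (1 - (n:ℤ)) ((n:ℤ) - 1), ((n:ℤ) - a).toNat = 2 * n ^ 2 - n := by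
  have h : ∑ a ∈ Finset.Icc (1 - (n:ℤ)) ((n:ℤ) - 1), ((n:ℤ) - a).toNat
      = ∑ k ∈ Finset.Icc 1 (2 * n - 1), k := by
    refine Finset.sum_nbij' (fun a => ((n:ℤ) - a).toNat) (fun k => (n:ℤ) - k) ?_ ?_ ?_ ?_ ?_
    · intro a ha; simp only [Finset.mem_Icc] at *; omega
    · intro k hk; simp only [Finset.mem_Icc] at *; omega
    · intro a ha; simp only [Finset.mem_Icc] at ha; omega
    · intro k hk; simp only [Finset.mem_Icc] at hk; omega
    · intro a ha; rfl
  rw [h]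
  rcases Nat.eq_zero_or_pos n with rfl | hn
  · simp
  have h2 : Finset.range (2 * n) = insert 0 (Finset.Icc 1 (2 * n - 1)) := by
    ext k; simp [Finset.mem_Icc, Finset.mem_range]; omega
  have h0 : (0:ℕ) ∉ Finset.Icc 1 (2 * n - 1) := by simp
  have hra := Finset.sum_range_id_mul_two (2 * n)
  rw [h2, Finset.sum_insert h0, zero_add] at hra
  -- hra : (∑ k ∈ Icc 1 (2n-1), k) * 2 = 2n * (2n - 1)
  zify [show (1:ℕ) ≤ 2 * n by omega, show n ≤ 2 * n ^ 2 by nlinarith] at hra ⊢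
  nlinarith [hra]



noncomputable def Fs (n : ℕ) : Finset (ℤ × ℤ) :=
  (Finset.Icc (1 - (n:ℤ)) ((n:ℤ) - 1) ×ˢ Finset.Icc (1 - (n:ℤ)) ((n:ℤ) - 1)).filter
    (fun p => p.1 ≤ p.2)

lemma mem_Fs {n : ℕ} {p : ℤ × ℤ} :
    p ∈ Fs n ↔ 1 - (n:ℤ) ≤ p.1 ∧ p.1 ≤ p.2 ∧ p.2 ≤ (n:ℤ) - 1 := by
  simp only [Fs, Finset.mem_filter, Finset.mem_product, Finset.mem_Icc]
  constructor
  · rintro ⟨⟨⟨h1, h2⟩, h3, h4⟩, h5⟩; exact ⟨h1, h5, h4⟩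
  · rintro ⟨h1, h2, h3⟩; exact ⟨⟨⟨h1, by omega⟩, by omega, h3⟩, h2⟩

lemma card_Fs (n : ℕ) : (Fs n).card = 2 * n ^ 2 - n := by
  have key : (Fs n).card = ∑ a ∈ Finset.Icc (1 - (n:ℤ)) ((n:ℤ) - 1), ((n:ℤ) - a).toNat := by
    rw [Finset.card_eq_sum_card_fiberwise
      (f := fun p : ℤ × ℤ => p.1) (t := Finset.Icc (1 - (n:ℤ)) ((n:ℤ) - 1))
      (fun p hp => by simp only [Finset.coe_Icc, Set.mem_Icc]; have := mem_Fs.1 hp; omega)]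
    refine Finset.sum_congr rfl ?_
    intro a ha
    simp only [Finset.mem_Icc] at ha
    have : ((Fs n).filter (fun p => p.1 = a)).card = (Finset.Icc a ((n:ℤ) - 1)).card := by
      refine Finset.card_bij (fun p _ => p.2) ?_ ?_ ?_
      · intro p hp
        simp only [Finset.mem_filter] at hp
        have h := mem_Fs.1 hp.1
        simp only [Finset.mem_Icc]
        omega
      · intro p hp q hq hpq
        simp only [Finset.mem_filter] at hp hq
        exact Prod.ext (hp.2.trans hq.2.symm) hpq
      · intro b hb
        simp only [Finset.mem_Icc] at hb
        exact ⟨(a, b), Finset.mem_filter.2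
          ⟨mem_Fs.2 ⟨by omega, by omega, by omega⟩, rfl⟩, rfl⟩
    rw [this, Int.card_Icc]
    congr 1
    omega
  rw [key]
  exact sum_eq n


lemma Cn_subset_Pn (n : ℕ) : Cn n ⊆ Pn n := by
  rintro _ ⟨i, hi, rfl⟩
  simp only [Set.mem_Icc] at hi
  exact Or.inr ⟨i - n, i - 1, by omega, by omega, by omega, rfl⟩

lemma closure_eq (n : ℕ) : patchworkClosure (Cn n) = Pn n := by
  apply le_antisymm
  · exact Set.sInter_subset_of_mem ⟨patchwork_Pn n, Cn_subset_Pn n⟩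
  · intro A hA
    rcases hA with (rfl | rfl) | ⟨a, b, h1, h2, h3, rfl⟩
    · exact Set.mem_sInter.2 fun Q hQ => hQ.1.1
    · exact Set.mem_sInter.2 fun Q hQ => hQ.1.2.1
    · exact Set.mem_sInter.2 fun Q hQ => gen_all hQ.1 hQ.2 a b h1 h2 h3

lemma encard_Cn (n : ℕ) : (Cn n).encard = (n : ℕ∞) := by
  have hinj : Set.InjOn (fun i : ℤ => Set.Icc (i - (n:ℤ)) (i - 1)) (Set.Icc 1 (n:ℤ)) := by
    intro i hi j hj hij
    simp only [Set.mem_Icc] at hi hj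
    simp only at hij
    have h1 : i - (n:ℤ) ∈ Set.Icc (j - (n:ℤ)) (j - 1) := by
      rw [← hij]; exact Set.mem_Icc.2 ⟨le_rfl, by omega⟩
    have h2 : j - (n:ℤ) ∈ Set.Icc (i - (n:ℤ)) (i - 1) := by
      rw [hij]; exact Set.mem_Icc.2 ⟨le_rfl, by omega⟩
    simp only [Set.mem_Icc] at h1 h2
    omega
  rw [Cn, hinj.encard_image]
  rw [← Finset.coe_Icc, Set.encard_coe_eq_coe_finsetCard, Int.card_Icc]
  congr 1
  omega

lemma encard_Pn (n : ℕ) : (Pn n).encard = ((2 * n ^ 2 - n + 2 : ℕ) : ℕ∞) := by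
  set I : Set (Set ℤ) :=
    {A | ∃ a b : ℤ, 1 - (n:ℤ) ≤ a ∧ a ≤ b ∧ b ≤ (n:ℤ) - 1 ∧ A = Set.Icc a b} with hIdef
  have hI : I = (fun p : ℤ × ℤ => Set.Icc p.1 p.2) '' ↑(Fs n) := by
    ext A
    simp only [hIdef, Set.mem_setOf_eq, Set.mem_image, Finset.mem_coe]
    constructor
    · rintro ⟨a, b, h1, h2, h3, rfl⟩
      exact ⟨(a, b), mem_Fs.2 ⟨h1, h2, h3⟩, rfl⟩
    · rintro ⟨p, hp, rfl⟩
      have := mem_Fs.1 hp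
      exact ⟨p.1, p.2, this.1, this.2.1, this.2.2, rfl⟩
  have hinj : Set.InjOn (fun p : ℤ × ℤ => Set.Icc p.1 p.2) ↑(Fs n) := by
    intro p hp q hq hpq
    have hp' := mem_Fs.1 hp
    have hq' := mem_Fs.1 hq
    simp only at hpq
    have h1 : p.1 ∈ Set.Icc q.1 q.2 := by
      rw [← hpq]; exact Set.mem_Icc.2 ⟨le_rfl, hp'.2.1⟩
    have h2 : q.1 ∈ Set.Icc p.1 p.2 := by
      rw [hpq]; exact Set.mem_Icc.2 ⟨le_rfl, hq'.2.1⟩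
    have h3 : p.2 ∈ Set.Icc q.1 q.2 := by
      rw [← hpq]; exact Set.mem_Icc.2 ⟨hp'.2.1, le_rfl⟩
    have h4 : q.2 ∈ Set.Icc p.1 p.2 := by
      rw [hpq]; exact Set.mem_Icc.2 ⟨hq'.2.1, le_rfl⟩
    simp only [Set.mem_Icc] at h1 h2 h3 h4
    exact Prod.ext (by omega) (by omega)
  have hIcard : I.encard = ((2 * n ^ 2 - n : ℕ) : ℕ∞) := by
    rw [hI, hinj.encard_image, Set.encard_coe_eq_coe_finsetCard, card_Fs]
  have hPn : Pn n = insert ∅ (insert Set.univ I) := by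
    rw [Pn, ← hIdef]
    ext A
    simp only [Set.mem_union, Set.mem_insert_iff, Set.mem_singleton_iff]
    tauto
  have hne : (∅ : Set ℤ) ∉ insert Set.univ I := by
    rintro (h | ⟨a, b, h1, h2, h3, h4⟩)
    · have : (0:ℤ) ∈ (∅ : Set ℤ) := h ▸ Set.mem_univ 0
      exact this
    · have : a ∈ (∅ : Set ℤ) := h4 ▸ Set.mem_Icc.2 ⟨le_rfl, h2⟩
      exact this
  have hnu : (Set.univ : Set ℤ) ∉ I := by
    rintro ⟨a, b, h1, h2, h3, h4⟩
    have : ((n:ℤ)) ∈ Set.Icc a b := h4 ▸ Set.mem_univ _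
    simp only [Set.mem_Icc] at this
    omega
  rw [hPn, Set.encard_insert_of_notMem hne, Set.encard_insert_of_notMem hnu, hIcard]
  have : ((2 * n ^ 2 - n + 2 : ℕ) : ℕ∞) = ((2 * n ^ 2 - n : ℕ) : ℕ∞) + 1 + 1 := by
    push_cast
    ring
  rw [this]

end St18

theorem statement18 (n : ℕ) :
    ∃ (Ω : Type) (_ : LinearOrder Ω) (C : Set (Set Ω)),
      C.encard = (n : ℕ∞) ∧ (∀ A ∈ C, IsConvex (· ≤ · : Ω → Ω → Prop) A) ∧
      (patchworkClosure C).encard = ((2 * n ^ 2 - n + 2 : ℕ) : ℕ∞) := by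
  {
  refine ⟨ℤ, inferInstance, St18.Cn n, St18.encard_Cn n, ?_, ?_⟩
  · rintro _ ⟨i, hi, rfl⟩
    intro p q r hpq hqr hp hr
    simp only [Set.mem_Icc] at *
    omega
  · rw [St18.closure_eq n]
    exact St18.encard_Pn n }
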